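/- There exists a universal constant C > 0 such that for every η > 0 there is N with the following property for all n ≥ N. Set m_n := ⌈√(n/(η² ln n))⌉. Let A ⊆ [0,1]² be a Boolean combination of at most 1000 halfdisks, each of radius at most 1000·√(ln n / n), and let A' be the union of all cells of the dissection D(m_n) that are entirely contained in A. Then area(A') ≥ area(A) − C · η · (ln n / n). -/

import Mathlib

open MeasureTheory Real Metric
open scoped ENNReal

/-- The Euclidean plane. -/
abbrev Plane : Type := EuclideanSpace ℝ (Fin 2)

/-- The unit square `[0,1]²`. -/
def unitSquare : Set Plane :=
  {p | p 0 ∈ Set.Icc (0 : ℝ) 1 ∧ p 1 ∈ Set.Icc (0 : ℝ) 1}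

/-- The cell `c_{i,j} = [i/m, (i+1)/m] × [j/m, (j+1)/m]` of the dissection `D(m)`. -/
def cell (m i j : ℕ) : Set Plane :=
  {p | p 0 ∈ Set.Icc ((i : ℝ) / m) ((i + 1 : ℕ) / m) ∧
       p 1 ∈ Set.Icc ((j : ℝ) / m) ((j + 1 : ℕ) / m)}

/-- The side count `m_n = ⌈√(n/(η² ln n))⌉` of the dissection. -/
noncomputable def mOf (η : ℝ) (n : ℕ) : ℕ :=
  ⌈Real.sqrt (n / (η ^ 2 * Real.log n))⌉₊

/-- `D` is a halfdisk of radius at most `ρmax`: the intersection of a closed ball with a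
closed halfplane whose boundary line passes through the centre of the ball. -/
def IsHalfdisk (ρmax : ℝ) (D : Set Plane) : Prop :=
  ∃ (x : Plane) (ρ : ℝ) (v : Plane), 0 ≤ ρ ∧ ρ ≤ ρmax ∧ v ≠ 0 ∧
    D = closedBall x ρ ∩ {p : Plane | (inner ℝ v (p - x) : ℝ) ≤ 0}

/-- The union of all cells of `D(m)` entirely contained in `A`. -/
def innerCells (m : ℕ) (A : Set Plane) : Set Plane :=
  ⋃ i ∈ Finset.range m, ⋃ j ∈ Finset.range m, ⋃ (_ : cell m i j ⊆ A), cell m i j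

section Topology
variable {X : Type*} [TopologicalSpace X]

lemma my_preconnected_frontier {s t : Set X} (hs : IsPreconnected s)
    (h1 : (s ∩ t).Nonempty) (h2 : (s \ t).Nonempty) : (s ∩ frontier t).Nonempty := by
  by_contra h
  rw [Set.not_nonempty_iff_eq_empty] at h
  have hsub : s ⊆ interior t ∪ interior tᶜ := by
    intro p hp
    have hpf : p ∉ frontier t := fun hf => (Set.eq_empty_iff_forall_notMem.1 h p) ⟨hp, hf⟩
    by_cases hc : p ∈ closure t
    · left; by_contra hint; exact hpf ⟨hc, hint⟩
    · right; rw [interior_compl]; exact hc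
  obtain ⟨p, hp, hpt⟩ := h1
  obtain ⟨q, hq, hqt⟩ := h2
  have hpu : p ∈ interior t := by
    have : p ∉ frontier t := fun hf => (Set.eq_empty_iff_forall_notMem.1 h p) ⟨hp, hf⟩
    by_contra hint; exact this ⟨subset_closure hpt, hint⟩
  have hqv : q ∈ interior tᶜ := by
    have : q ∉ frontier t := fun hf => (Set.eq_empty_iff_forall_notMem.1 h q) ⟨hq, hf⟩
    rw [interior_compl]
    intro hc; exact this ⟨hc, fun hint => hqt (interior_subset hint)⟩
  obtain ⟨r, hrs, hru, hrv⟩ := hs _ _ isOpen_interior isOpen_interior hsub ⟨p, hp, hpu⟩ ⟨q, hq, hqv⟩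
  exact (interior_subset hrv) (interior_subset hru)

lemma my_frontier_biUnion {ι : Type*} (s : Finset ι) (f : ι → Set X) :
    frontier (⋃ i ∈ s, f i) ⊆ ⋃ i ∈ s, frontier (f i) := by
  classical
  induction s using Finset.induction with
  | empty => simp
  | insert _ _ ha ih =>
      rw [Finset.set_biUnion_insert, Finset.set_biUnion_insert]
      refine (frontier_union_subset _ _).trans ?_
      refine Set.union_subset ?_ ?_
      · exact (Set.inter_subset_left).trans Set.subset_union_left
      · exact (Set.inter_subset_right).trans (ih.trans Set.subset_union_right)

lemma my_frontier_biInter {ι : Type*} (s : Finset ι) (f : ι → Set X) :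
    frontier (⋂ i ∈ s, f i) ⊆ ⋃ i ∈ s, frontier (f i) := by
  classical
  induction s using Finset.induction with
  | empty => simp
  | insert _ _ ha ih =>
      rw [Finset.set_biInter_insert, Finset.set_biUnion_insert]
      refine (frontier_inter_subset _ _).trans ?_
      refine Set.union_subset ?_ ?_
      · exact (Set.inter_subset_left).trans Set.subset_union_left
      · exact (Set.inter_subset_right).trans (ih.trans Set.subset_union_right)

end Topology

section Volume

local notation "κ" => volume (ball (0:Plane) 1)

lemma my_finrank : Module.finrank ℝ Plane = 2 := finrank_euclideanSpace_fin

lemma vol_closedBall (x : Plane) {r : ℝ} (hr : 0 ≤ r) :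
    volume (closedBall x r) = ENNReal.ofReal (r ^ 2) * κ := by
  rw [Measure.addHaar_closedBall volume x hr, my_finrank]

lemma vol_ball (x : Plane) {r : ℝ} (hr : 0 ≤ r) :
    volume (ball x r) = ENNReal.ofReal (r ^ 2) * κ := by
  rw [Measure.addHaar_ball volume x hr, my_finrank]

lemma sphere_thickening_bound (x : Plane) {ρ δ : ℝ} (hρ : 0 ≤ ρ) (hδ : 0 < δ) :
    volume (thickening δ (sphere x ρ)) ≤ ENNReal.ofReal (4 * (ρ * δ + δ ^ 2)) * κ := by
  have hsub : thickening δ (sphere x ρ) ⊆ closedBall x (ρ + δ) \ ball x (ρ - δ) := by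
    intro p hp
    obtain ⟨q, hq, hpq⟩ := mem_thickening_iff.1 hp
    rw [mem_sphere] at hq
    have h1 : dist p x ≤ dist p q + dist q x := dist_triangle _ _ _
    have h2 : dist q x ≤ dist q p + dist p x := dist_triangle _ _ _
    rw [dist_comm q p] at h2
    constructor
    · rw [mem_closedBall]; linarith
    · rw [mem_ball]; push_neg; linarith
  refine (measure_mono hsub).trans ?_
  rcases le_or_gt δ ρ with hcase | hcase
  · have hb : ball x (ρ - δ) ⊆ closedBall x (ρ + δ) :=
      (ball_subset_ball (by linarith)).trans ball_subset_closedBall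
    rw [measure_diff hb measurableSet_ball.nullMeasurableSet measure_ball_lt_top.ne]
    rw [vol_closedBall x (by linarith), vol_ball x (by linarith)]
    rw [tsub_le_iff_right, ← add_mul, ← ENNReal.ofReal_add (by positivity) (by positivity)]
    apply mul_le_mul_left
    apply ENNReal.ofReal_le_ofReal
    nlinarith
  · refine (measure_mono Set.diff_subset).trans ?_
    rw [vol_closedBall x (by linarith)]
    apply mul_le_mul_left
    apply ENNReal.ofReal_le_ofReal
    nlinarith

end Volume
lemma exists_unit_orth (v : Plane) (hv : v ≠ 0) :
    ∃ u : Plane, ‖u‖ = 1 ∧ ∀ q : Plane, (inner ℝ v q : ℝ) = 0 → ∃ t : ℝ, q = t • u := by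
  set w : Plane := (WithLp.equiv 2 (Fin 2 → ℝ)).symm ![-(v 1), v 0] with hw
  have hw0 : w 0 = -(v 1) := by simp [hw]
  have hw1 : w 1 = v 0 := by simp [hw]
  have hvC : v 0 ≠ 0 ∨ v 1 ≠ 0 := by
    by_contra h; push_neg at h
    exact hv (by ext i; fin_cases i <;> simp [h.1, h.2])
  have hwne : w ≠ 0 := by
    intro h
    have h0 : v 1 = 0 := by have := congrArg (fun z : Plane => z 0) h; simp [hw0] at this; simpa using this
    have h1 : v 0 = 0 := by have := congrArg (fun z : Plane => z 1) h; simp [hw1] at this; simpa using this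
    rcases hvC with hc | hc <;> exact hc ‹_›
  have hnw : 0 < ‖w‖ := norm_pos_iff.2 hwne
  refine ⟨‖w‖⁻¹ • w, ?_, ?_⟩
  · rw [norm_smul, Real.norm_eq_abs, abs_of_pos (inv_pos.2 hnw), inv_mul_cancel₀ hnw.ne']
  · intro q hq
    have hden : 0 < v 0 ^ 2 + v 1 ^ 2 := by rcases hvC with h | h <;> positivity
    have hiq : v 0 * q 0 + v 1 * q 1 = 0 := by
      simp [PiLp.inner_apply, RCLike.inner_apply, Fin.sum_univ_two, conj_trivial] at hq; linarith [hq]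
    set t : ℝ := (v 0 * q 1 - v 1 * q 0) / (v 0 ^ 2 + v 1 ^ 2) with ht
    have h0 : q 0 = t * w 0 := by
      rw [hw0, ht, div_mul_eq_mul_div, eq_div_iff hden.ne']
      linear_combination (v 0) * hiq
    have h1 : q 1 = t * w 1 := by
      rw [hw1, ht, div_mul_eq_mul_div, eq_div_iff hden.ne']
      linear_combination (v 1) * hiq
    refine ⟨t * ‖w‖, ?_⟩
    have hsm : (t * ‖w‖) • (‖w‖⁻¹ • w) = t • w := by
      rw [smul_smul, mul_assoc, mul_inv_cancel₀ hnw.ne', mul_one]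
    rw [hsm]
    ext i; fin_cases i
    · simpa using h0
    · simpa using h1

local notation "κ" => volume (ball (0:Plane) 1)

lemma segment_thickening_bound (x v : Plane) {ρ δ : ℝ} (hρ : 0 ≤ ρ) (hδ : 0 < δ)
    (hv : v ≠ 0) :
    volume (thickening δ ({p : Plane | (inner ℝ v (p - x) : ℝ) = 0} ∩ closedBall x ρ))
      ≤ ENNReal.ofReal (8 * (ρ * δ + δ ^ 2)) * κ := by
  obtain ⟨u, hu, hrep⟩ := exists_unit_orth v hv
  set K := ⌈2 * ρ / δ⌉₊ with hK
  set ctr : ℕ → Plane := fun k => x + (-ρ + k * δ) • u with hctr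
  have hcover : thickening δ ({p : Plane | (inner ℝ v (p - x) : ℝ) = 0} ∩ closedBall x ρ)
      ⊆ ⋃ k ∈ Finset.range (K+1), ball (ctr k) (2*δ) := by
    intro p' hp'
    obtain ⟨p, ⟨hp0, hpball⟩, hd⟩ := mem_thickening_iff.1 hp'
    obtain ⟨τ, hτ⟩ := hrep (p - x) hp0
    have hτabs : |τ| ≤ ρ := by
      have hn : ‖p - x‖ = |τ| := by rw [hτ, norm_smul, hu, mul_one, Real.norm_eq_abs]
      rw [← abs_of_nonneg (abs_nonneg τ) ] at hn
      have := mem_closedBall.1 hpball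
      rw [dist_eq_norm] at this
      rw [hτ] at this
      rw [norm_smul, hu, mul_one, Real.norm_eq_abs] at this
      exact this
    have hτlo : -ρ ≤ τ := by have := abs_le.1 hτabs; linarith [this.1]
    have hτhi : τ ≤ ρ := (abs_le.1 hτabs).2
    set k := ⌊(τ + ρ)/δ⌋₊ with hk
    have hfr0 : 0 ≤ (τ + ρ)/δ := div_nonneg (by linarith) hδ.le
    have h1 : (k:ℝ) * δ ≤ τ + ρ := by
      have := Nat.floor_le hfr0
      rw [le_div_iff₀ hδ] at this
      linarith
    have h2 : τ + ρ < (k:ℝ) * δ + δ := by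
      have := Nat.lt_floor_add_one ((τ + ρ)/δ)
      rw [div_lt_iff₀ hδ] at this
      linarith [this]
    have habs : |τ - (-ρ + k * δ)| < δ := by
      rw [abs_lt]; constructor <;> nlinarith
    have hkK : k < K + 1 := by
      have hle : (τ+ρ)/δ ≤ 2*ρ/δ := by gcongr; linarith
      have : k ≤ K := (Nat.floor_mono hle).trans (Nat.floor_le_ceil _)
      omega
    refine Set.mem_biUnion (Finset.mem_range.2 hkK) ?_
    rw [mem_ball]
    have hpc : p - ctr k = (τ - (-ρ + k*δ)) • u := by
      have hstep : p - (x + (-ρ + (k:ℝ) * δ) • u) = (p - x) - (-ρ + (k:ℝ) * δ) • u := by abel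
      rw [hctr]
      dsimp only
      rw [hstep, hτ, ← sub_smul]
    have hdc : dist p (ctr k) = |τ - (-ρ + k*δ)| := by
      rw [dist_eq_norm, hpc, norm_smul, hu, mul_one, Real.norm_eq_abs]
    calc dist p' (ctr k) ≤ dist p' p + dist p (ctr k) := dist_triangle _ _ _
      _ < δ + δ := by rw [hdc]; exact add_lt_add hd habs
      _ = 2*δ := by ring
  refine (measure_mono hcover).trans ((measure_biUnion_finset_le _ _).trans ?_)
  have hsum : ∑ k ∈ Finset.range (K+1), volume (ball (ctr k) (2*δ))
      = ((K+1 : ℕ) : ℝ≥0∞) * (ENNReal.ofReal ((2*δ)^2) * κ) := by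
    rw [Finset.sum_congr rfl (fun k _ => vol_ball (ctr k) (by positivity : (0:ℝ) ≤ 2*δ)),
      Finset.sum_const, Finset.card_range, nsmul_eq_mul]
  rw [hsum]
  have hKbound : ((K+1 : ℕ) : ℝ≥0∞) ≤ ENNReal.ofReal (2*ρ/δ + 2) := by
    rw [← ENNReal.ofReal_natCast]
    apply ENNReal.ofReal_le_ofReal
    push_cast
    have := Nat.ceil_lt_add_one (show (0:ℝ) ≤ 2*ρ/δ by positivity)
    linarith
  calc ((K+1 : ℕ) : ℝ≥0∞) * (ENNReal.ofReal ((2*δ)^2) * κ)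
      ≤ ENNReal.ofReal (2*ρ/δ + 2) * (ENNReal.ofReal ((2*δ)^2) * κ) :=
        mul_le_mul_left hKbound _
    _ = ENNReal.ofReal ((2*ρ/δ + 2) * (2*δ)^2) * κ := by
        rw [← mul_assoc, ← ENNReal.ofReal_mul (by positivity)]
    _ ≤ ENNReal.ofReal (8 * (ρ * δ + δ ^ 2)) * κ := by
        apply mul_le_mul_left
        apply ENNReal.ofReal_le_ofReal
        have : (2*ρ/δ + 2) * (2*δ)^2 = 8*(ρ*δ) + 8*δ^2 := by field_simp; ring
        rw [this]; ring_nf; rfl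

lemma halfdisk_frontier_bound (x v : Plane) {ρ δ : ℝ} (hρ : 0 ≤ ρ) (hδ : 0 < δ)
    (hv : v ≠ 0) :
    volume (thickening δ (frontier (closedBall x ρ ∩ {p : Plane | (inner ℝ v (p - x) : ℝ) ≤ 0})))
      ≤ ENNReal.ofReal (12 * (ρ * δ + δ ^ 2)) * κ := by
  have hfr : frontier (closedBall x ρ ∩ {p : Plane | (inner ℝ v (p - x) : ℝ) ≤ 0})
      ⊆ sphere x ρ ∪ ({p : Plane | (inner ℝ v (p - x) : ℝ) = 0} ∩ closedBall x ρ) := by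
    refine (frontier_inter_subset _ _).trans ?_
    have h1 : frontier (closedBall x ρ) ⊆ sphere x ρ := by
      rw [frontier_closedBall' x ρ]
    have h2 : frontier {p : Plane | (inner ℝ v (p - x) : ℝ) ≤ 0}
        ⊆ {p : Plane | (inner ℝ v (p - x) : ℝ) = 0} := by
      have hf : Continuous fun p : Plane => (inner ℝ v (p - x) : ℝ) :=
        continuous_const.inner (continuous_id.sub continuous_const)
      exact frontier_le_subset_eq hf continuous_const
    rintro p (⟨hpf, -⟩ | ⟨hpc, hpf⟩)
    · exact Or.inl (h1 hpf)
    · right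
      refine ⟨h2 hpf, ?_⟩
      rwa [IsClosed.closure_eq Metric.isClosed_closedBall] at hpc
  calc volume (thickening δ (frontier (closedBall x ρ ∩ {p : Plane | (inner ℝ v (p - x) : ℝ) ≤ 0})))
      ≤ volume (thickening δ (sphere x ρ) ∪
          thickening δ ({p : Plane | (inner ℝ v (p - x) : ℝ) = 0} ∩ closedBall x ρ)) := by
        rw [← thickening_union]
        exact measure_mono (thickening_subset_of_subset δ hfr)
    _ ≤ volume (thickening δ (sphere x ρ)) +
          volume (thickening δ ({p : Plane | (inner ℝ v (p - x) : ℝ) = 0} ∩ closedBall x ρ)) :=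
        measure_union_le _ _
    _ ≤ ENNReal.ofReal (4 * (ρ * δ + δ ^ 2)) * κ + ENNReal.ofReal (8 * (ρ * δ + δ ^ 2)) * κ :=
        add_le_add (sphere_thickening_bound x hρ hδ) (segment_thickening_bound x v hρ hδ hv)
    _ = ENNReal.ofReal (12 * (ρ * δ + δ ^ 2)) * κ := by
        rw [← add_mul, ← ENNReal.ofReal_add (by positivity) (by positivity)]
        ring_nf


lemma convex_cell (m i j : ℕ) : Convex ℝ (cell m i j) := by
  intro p hp q hq a b ha hb hab
  constructor
  · have := (convex_Icc ((i : ℝ) / m) (((i + 1 : ℕ) : ℝ) / m)) hp.1 hq.1 ha hb hab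
    simpa using this
  · have := (convex_Icc ((j : ℝ) / m) (((j + 1 : ℕ) : ℝ) / m)) hp.2 hq.2 ha hb hab
    simpa using this

lemma coord_cell {m : ℕ} (hm : 0 < m) {x : ℝ} (hx : x ∈ Set.Icc (0 : ℝ) 1) :
    ∃ i : ℕ, i < m ∧ (i : ℝ) / m ≤ x ∧ x ≤ ((i + 1 : ℕ) : ℝ) / m := by
  have hmR : (0:ℝ) < m := Nat.cast_pos.2 hm
  refine ⟨min ⌊(m : ℝ) * x⌋₊ (m - 1), by omega, ?_, ?_⟩
  · rw [div_le_iff₀ hmR]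
    have h1 : (min ⌊(m : ℝ) * x⌋₊ (m - 1) : ℕ) ≤ ⌊(m : ℝ) * x⌋₊ := min_le_left _ _
    have h2 : ((⌊(m : ℝ) * x⌋₊ : ℕ) : ℝ) ≤ (m : ℝ) * x := Nat.floor_le (mul_nonneg hmR.le hx.1)
    calc ((min ⌊(m : ℝ) * x⌋₊ (m - 1) : ℕ) : ℝ) ≤ ((⌊(m : ℝ) * x⌋₊ : ℕ) : ℝ) := by exact_mod_cast h1
      _ ≤ (m : ℝ) * x := h2
      _ = x * m := mul_comm _ _
  · rcases le_or_gt ⌊(m : ℝ) * x⌋₊ (m - 1) with h | h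
    · rw [min_eq_left h, le_div_iff₀ hmR]
      have h2 : (m : ℝ) * x < (⌊(m : ℝ) * x⌋₊ : ℝ) + 1 := Nat.lt_floor_add_one _
      push_cast
      linarith
    · rw [min_eq_right h.le]
      have he : ((m - 1 + 1 : ℕ) : ℝ) = (m : ℝ) := by
        have : m - 1 + 1 = m := by omega
        rw [this]
      rw [he, div_self hmR.ne']
      exact hx.2

lemma dist_lt_cell {m i j : ℕ} (hm : 0 < m) {p r : Plane}
    (hp : p ∈ cell m i j) (hr : r ∈ cell m i j) : dist p r < 2 / m := by
  have hmR : (0:ℝ) < m := Nat.cast_pos.2 hm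
  have key : ∀ (a : ℕ) (u w : ℝ), u ∈ Set.Icc ((a : ℝ) / m) (((a + 1 : ℕ) : ℝ) / m) →
      w ∈ Set.Icc ((a : ℝ) / m) (((a + 1 : ℕ) : ℝ) / m) → dist u w ≤ 1 / m := by
    intro a u w hu hw
    rw [Real.dist_eq, abs_le]
    obtain ⟨hu1, hu2⟩ := hu
    obtain ⟨hw1, hw2⟩ := hw
    have hlen : ((a + 1 : ℕ) : ℝ) / m - (a : ℝ) / m = 1 / m := by
      push_cast; field_simp; ring
    constructor <;> linarith
  have h0 := key i (p 0) (r 0) hp.1 hr.1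
  have h1 := key j (p 1) (r 1) hp.2 hr.2
  rw [EuclideanSpace.dist_eq, Fin.sum_univ_two]
  rw [Real.sqrt_lt' (by positivity)]
  have d0 : (0:ℝ) ≤ dist (p 0) (r 0) := dist_nonneg
  have d1 : (0:ℝ) ≤ dist (p 1) (r 1) := dist_nonneg
  have hq : (0:ℝ) < 1 / m := by positivity
  have e4 : (2 / (m:ℝ)) ^ 2 = 4 * ((1/(m:ℝ)) * (1/(m:ℝ))) := by ring
  have e1 : dist (p 1) (r 1) ^ 2 = dist (p 1) (r 1) * dist (p 1) (r 1) := by ring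
  have e0' : dist (p 0) (r 0) ^ 2 = dist (p 0) (r 0) * dist (p 0) (r 0) := by ring
  rw [e4, e1, e0']
  linarith [mul_le_mul h0 h0 d0 hq.le, mul_le_mul h1 h1 d1 hq.le, mul_pos hq hq]


set_option maxHeartbeats 2000000 in
/-- There is a universal constant `C > 0` such that for every `η > 0`
there is `N` with: for all `n ≥ N`, if `A ⊆ [0,1]²` is a Boolean combination of at most
`1000` halfdisks of radius at most `1000 √(ln n / n)`, and `A'` is the union of the cells of
`D(m_n)` contained in `A`, then `area(A') ≥ area(A) − C η (ln n / n)`. -/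
theorem boolean_combination_inner_cells_area :
    ∃ C : ℝ, 0 < C ∧ ∀ η : ℝ, 0 < η → ∃ N : ℕ, ∀ n : ℕ, N ≤ n →
      ∀ (k : ℕ), k ≤ 1000 → ∀ (D : Fin k → Set Plane),
        (∀ i, IsHalfdisk (1000 * Real.sqrt (Real.log n / n)) (D i)) →
        ∀ (S : Set (Fin k → Bool)) (A : Set Plane),
          A = ⋃ e ∈ S, ⋂ i, cond (e i) (D i) (D i)ᶜ →
          A ⊆ unitSquare →
          volume A ≤ volume (innerCells (mOf η n) A)
            + ENNReal.ofReal (C * η * (Real.log n / n)) := by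

  classical
  have hκfin : volume (ball (0:Plane) 1) ≠ ⊤ := measure_ball_lt_top.ne
  set c₀ : ℝ := (volume (ball (0:Plane) 1)).toReal with hc₀def
  have hκeq : volume (ball (0:Plane) 1) = ENNReal.ofReal c₀ := (ENNReal.ofReal_toReal hκfin).symm
  have hc₀ : 0 ≤ c₀ := ENNReal.toReal_nonneg
  refine ⟨10000000000 * c₀ + 1, by positivity, ?_⟩
  intro η hη
  refine ⟨3, ?_⟩
  intro n hn3 k hk D hD S A hA hAsq
  have hn1 : (1:ℝ) < (n:ℝ) := by
    have h3 : (3:ℝ) ≤ (n:ℝ) := by exact_mod_cast hn3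
    linarith
  have hnpos : (0:ℝ) < (n:ℝ) := by linarith
  have hlog : 0 < Real.log n := Real.log_pos hn1
  set L : ℝ := Real.log n / n with hLdef
  have hL : 0 < L := div_pos hlog hnpos
  have hsL : 0 < Real.sqrt L := Real.sqrt_pos.2 hL
  set m : ℕ := mOf η n with hmdef
  have hm_ge : (η * Real.sqrt L)⁻¹ ≤ (m:ℝ) := by
    have hsqrt : Real.sqrt ((n:ℝ) / (η ^ 2 * Real.log n)) = (η * Real.sqrt L)⁻¹ := by
      have harg : (n:ℝ) / (η ^ 2 * Real.log n) = (η ^ 2)⁻¹ * L⁻¹ := by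
        rw [hLdef]
        field_simp
      rw [harg, Real.sqrt_mul (by positivity), Real.sqrt_inv, Real.sqrt_inv,
        Real.sqrt_sq hη.le, ← mul_inv]
    rw [hmdef]
    simp only [mOf]
    rw [← hsqrt]
    exact Nat.le_ceil _
  have hmpos : 0 < m := by
    have hinv : (0:ℝ) < (η * Real.sqrt L)⁻¹ := by positivity
    exact_mod_cast Nat.cast_pos.1 (lt_of_lt_of_le hinv hm_ge)
  have hmR : (0:ℝ) < m := Nat.cast_pos.2 hmpos
  set δ : ℝ := 2 / m with hδdef
  have hδ : 0 < δ := by positivity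
  have hδle : δ ≤ 2 * (η * Real.sqrt L) := by
    rw [hδdef, div_le_iff₀ hmR]
    have h1 : 1 ≤ (η * Real.sqrt L) * m := by
      have h2 := mul_le_mul_of_nonneg_left hm_ge
        (le_of_lt (show (0:ℝ) < η * Real.sqrt L by positivity))
      rwa [mul_inv_cancel₀ (by positivity : (η * Real.sqrt L) ≠ 0)] at h2
    nlinarith
  set ρm : ℝ := 1000 * Real.sqrt L with hρmdef
  have hρm : 0 ≤ ρm := by positivity
  -- Step B : frontier of A is inside the union of the frontiers of the halfdisks
  have hfrA : frontier A ⊆ ⋃ i : Fin k, frontier (D i) := by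
    have hSfin : S.Finite := Set.toFinite S
    have hAeq : A = ⋃ e ∈ hSfin.toFinset, ⋂ i, cond (e i) (D i) (D i)ᶜ := by
      rw [hA]; ext p
      simp only [Set.mem_iUnion, Set.Finite.mem_toFinset]
    rw [hAeq]
    refine (my_frontier_biUnion _ _).trans ?_
    refine Set.iUnion₂_subset fun e _ => ?_
    have h2 : (⋂ i, cond (e i) (D i) (D i)ᶜ)
        = ⋂ i ∈ (Finset.univ : Finset (Fin k)), cond (e i) (D i) (D i)ᶜ := by simp
    rw [h2]
    refine (my_frontier_biInter _ _).trans ?_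
    refine Set.iUnion₂_subset fun i _ => ?_
    have h3 : frontier (cond (e i) (D i) (D i)ᶜ) = frontier (D i) := by
      cases he : e i <;> simp [frontier_compl]
    rw [h3]
    exact Set.subset_iUnion (fun i => frontier (D i)) i
  -- Step A : points of A not covered by inner cells are near the frontier of A
  have hAdiff : A \ innerCells m A ⊆ thickening δ (frontier A) := by
    rintro p ⟨hpA, hpI⟩
    obtain ⟨hx0, hx1⟩ := hAsq hpA
    obtain ⟨i, him, hi1, hi2⟩ := coord_cell hmpos hx0
    obtain ⟨j, hjm, hj1, hj2⟩ := coord_cell hmpos hx1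
    have hpc : p ∈ cell m i j := ⟨⟨hi1, hi2⟩, ⟨hj1, hj2⟩⟩
    have hnot : ¬ cell m i j ⊆ A := by
      intro hsub
      apply hpI
      simp only [innerCells, Set.mem_iUnion]
      exact ⟨i, Finset.mem_range.2 him, j, Finset.mem_range.2 hjm, hsub, hpc⟩
    obtain ⟨q, hq1, hq2⟩ := Set.not_subset.1 hnot
    obtain ⟨r, hrc, hrf⟩ := my_preconnected_frontier (convex_cell m i j).isPreconnected
      ⟨p, hpc, hpA⟩ ⟨q, hq1, hq2⟩
    exact mem_thickening_iff.2 ⟨r, hrf, by rw [hδdef]; exact dist_lt_cell hmpos hpc hrc⟩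
  -- volume bound for the thickening of the frontier
  have hvol1 : volume (A \ innerCells m A)
      ≤ 1000 * (ENNReal.ofReal (12 * (ρm * δ + δ ^ 2)) * volume (ball (0:Plane) 1)) := by
    calc volume (A \ innerCells m A) ≤ volume (thickening δ (frontier A)) :=
        measure_mono hAdiff
      _ ≤ volume (thickening δ (⋃ i : Fin k, frontier (D i))) :=
          measure_mono (thickening_subset_of_subset δ hfrA)
      _ = volume (⋃ i : Fin k, thickening δ (frontier (D i))) := by rw [thickening_iUnion]
      _ ≤ ∑ i : Fin k, volume (thickening δ (frontier (D i))) := measure_iUnion_fintype_le _ _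
      _ ≤ ∑ _i : Fin k, ENNReal.ofReal (12 * (ρm * δ + δ ^ 2)) * volume (ball (0:Plane) 1) := by
          refine Finset.sum_le_sum fun i _ => ?_
          obtain ⟨x, ρ, v, hρ0, hρM, hv, hDi⟩ := hD i
          rw [hDi]
          refine (halfdisk_frontier_bound x v hρ0 hδ hv).trans ?_
          refine mul_le_mul_left (ENNReal.ofReal_le_ofReal ?_) _
          nlinarith [mul_le_mul_of_nonneg_right hρM hδ.le]
      _ = (k : ℝ≥0∞) * (ENNReal.ofReal (12 * (ρm * δ + δ ^ 2)) * volume (ball (0:Plane) 1)) := by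
          rw [Finset.sum_const, Finset.card_univ, Fintype.card_fin, nsmul_eq_mul]
      _ ≤ 1000 * (ENNReal.ofReal (12 * (ρm * δ + δ ^ 2)) * volume (ball (0:Plane) 1)) :=
          mul_le_mul_left (by exact_mod_cast hk) _
  rcases le_or_gt η 1 with hη1 | hη1
  · -- small η : use the thickening bound
    have hmul : Real.sqrt L * Real.sqrt L = L := Real.mul_self_sqrt hL.le
    have h1 : ρm * δ ≤ 2000 * (η * L) := by
      rw [hρmdef]
      calc 1000 * Real.sqrt L * δ ≤ 1000 * Real.sqrt L * (2 * (η * Real.sqrt L)) :=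
            mul_le_mul_of_nonneg_left hδle (by positivity)
        _ = 2000 * (η * (Real.sqrt L * Real.sqrt L)) := by ring
        _ = 2000 * (η * L) := by rw [hmul]
    have h2 : δ ^ 2 ≤ 4 * (η * L) := by
      have hsq : δ ^ 2 ≤ (2 * (η * Real.sqrt L)) ^ 2 := pow_le_pow_left₀ hδ.le hδle 2
      have he2 : (2 * (η * Real.sqrt L)) ^ 2 = 4 * (η ^ 2 * (Real.sqrt L * Real.sqrt L)) := by
        ring
      rw [he2, hmul] at hsq
      nlinarith [mul_nonneg hη.le hL.le]
    have hnum : 1000 * (12 * (ρm * δ + δ ^ 2)) * c₀ ≤ (10000000000 * c₀ + 1) * η * L := by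
      nlinarith [hc₀, mul_nonneg (mul_nonneg hη.le hL.le) hc₀, mul_nonneg hη.le hL.le]
    have hfinal : volume (A \ innerCells m A)
        ≤ ENNReal.ofReal ((10000000000 * c₀ + 1) * η * L) := by
      refine hvol1.trans ?_
      rw [hκeq]
      calc (1000:ℝ≥0∞) * (ENNReal.ofReal (12 * (ρm * δ + δ ^ 2)) * ENNReal.ofReal c₀)
          = ENNReal.ofReal (1000 * (12 * (ρm * δ + δ ^ 2)) * c₀) := by
            rw [← ENNReal.ofReal_mul (by positivity : (0:ℝ) ≤ 12 * (ρm * δ + δ ^ 2)),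
              ← ENNReal.ofReal_ofNat 1000,
              ← ENNReal.ofReal_mul (by norm_num : (0:ℝ) ≤ 1000)]
            congr 1
            ring
        _ ≤ _ := ENNReal.ofReal_le_ofReal hnum
    calc volume A ≤ volume (A ∩ innerCells m A) + volume (A \ innerCells m A) :=
        measure_le_inter_add_diff _ _ _
      _ ≤ volume (innerCells m A) + ENNReal.ofReal ((10000000000 * c₀ + 1) * η * L) :=
        add_le_add (measure_mono Set.inter_subset_right) hfinal
  · -- large η : A is covered by the halfdisks themselves
    have hAD : A ⊆ ⋃ i, D i := by
      rw [hA]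
      refine Set.iUnion₂_subset fun e he => ?_
      have hex : ∃ i, e i = true := by
        by_contra hco
        push_neg at hco
        have hall : ∀ i, e i = false := by
          intro i
          cases h : e i
          · rfl
          · exact absurd h (hco i)
        have hsubA : (⋂ i, (D i)ᶜ) ⊆ unitSquare := by
          refine Set.Subset.trans ?_ hAsq
          rw [hA]
          intro p hp
          refine Set.mem_biUnion he ?_
          refine Set.mem_iInter.2 fun i => ?_
          have hpi := Set.mem_iInter.1 hp i
          rw [hall i]
          exact hpi
        have hbdd : Bornology.IsBounded ((⋃ i, D i) ∪ unitSquare) := by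
          refine Bornology.IsBounded.union ?_ ?_
          · rw [Bornology.isBounded_iUnion]
            intro i
            obtain ⟨x, ρ, v, hρ0, hρM, hv, hDi⟩ := hD i
            rw [hDi]
            exact isBounded_closedBall.subset Set.inter_subset_left
          · refine isBounded_closedBall.subset (?_ : unitSquare ⊆ closedBall (0:Plane) 2)
            intro p hp
            rw [mem_closedBall, dist_zero_right, EuclideanSpace.norm_eq, Fin.sum_univ_two]
            obtain ⟨⟨h00, h01⟩, ⟨h10, h11⟩⟩ := hp
            have hle4 : ‖p 0‖ ^ 2 + ‖p 1‖ ^ 2 ≤ 4 := by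
              rw [Real.norm_eq_abs, Real.norm_eq_abs, sq_abs, sq_abs]
              nlinarith
            calc Real.sqrt (‖p 0‖ ^ 2 + ‖p 1‖ ^ 2) ≤ Real.sqrt 4 := Real.sqrt_le_sqrt hle4
              _ = 2 := by
                  rw [show (4:ℝ) = 2 ^ 2 by norm_num, Real.sqrt_sq (by norm_num : (0:ℝ) ≤ 2)]
        obtain ⟨R, hR⟩ := hbdd.subset_closedBall 0
        set p₀ : Plane := EuclideanSpace.single 0 (|R| + 1) with hp₀def
        have hp₀n : ‖p₀‖ = |R| + 1 := by
          rw [hp₀def, EuclideanSpace.norm_single, Real.norm_eq_abs,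
            abs_of_pos (by positivity : (0:ℝ) < |R| + 1)]
        have hp₀mem : p₀ ∈ ⋂ i, (D i)ᶜ := by
          refine Set.mem_iInter.2 fun i hmem => ?_
          have h5 : p₀ ∈ closedBall (0:Plane) R :=
            hR (Set.mem_union_left _ (Set.mem_iUnion.2 ⟨i, hmem⟩))
          rw [mem_closedBall, dist_zero_right, hp₀n] at h5
          linarith [le_abs_self R]
        have h6 : p₀ ∈ closedBall (0:Plane) R :=
          hR (Set.mem_union_right _ (hsubA hp₀mem))
        rw [mem_closedBall, dist_zero_right, hp₀n] at h6
        linarith [le_abs_self R]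
      obtain ⟨i, hi⟩ := hex
      intro p hp
      refine Set.mem_iUnion.2 ⟨i, ?_⟩
      have hpi := Set.mem_iInter.1 hp i
      rw [hi] at hpi
      exact hpi
    have hρsq : ρm ^ 2 = 1000000 * L := by
      rw [hρmdef, mul_pow, Real.sq_sqrt hL.le]
      norm_num
    have hAvol : volume A ≤ ENNReal.ofReal ((10000000000 * c₀ + 1) * η * L) := by
      calc volume A ≤ ∑ i : Fin k, volume (D i) :=
          (measure_mono hAD).trans (measure_iUnion_fintype_le _ _)
        _ ≤ ∑ _i : Fin k, ENNReal.ofReal (ρm ^ 2) * volume (ball (0:Plane) 1) := by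
            refine Finset.sum_le_sum fun i _ => ?_
            obtain ⟨x, ρ, v, hρ0, hρM, hv, hDi⟩ := hD i
            rw [hDi]
            refine (measure_mono Set.inter_subset_left).trans ?_
            refine (measure_mono (closedBall_subset_closedBall hρM)).trans ?_
            rw [vol_closedBall x hρm]
        _ = (k : ℝ≥0∞) * (ENNReal.ofReal (ρm ^ 2) * volume (ball (0:Plane) 1)) := by
            rw [Finset.sum_const, Finset.card_univ, Fintype.card_fin, nsmul_eq_mul]
        _ ≤ 1000 * (ENNReal.ofReal (ρm ^ 2) * volume (ball (0:Plane) 1)) :=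
            mul_le_mul_left (by exact_mod_cast hk) _
        _ = ENNReal.ofReal (1000 * ρm ^ 2 * c₀) := by
            rw [hκeq, ← ENNReal.ofReal_mul (by positivity : (0:ℝ) ≤ ρm ^ 2),
              ← ENNReal.ofReal_ofNat 1000,
              ← ENNReal.ofReal_mul (by norm_num : (0:ℝ) ≤ 1000)]
            congr 1
            ring
        _ ≤ ENNReal.ofReal ((10000000000 * c₀ + 1) * η * L) := by
            apply ENNReal.ofReal_le_ofReal
            rw [hρsq]
            nlinarith [hc₀, hL.le, mul_nonneg hL.le hc₀]
    exact hAvol.trans (self_le_add_left _ _)
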